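/- Let p be analytic on the open unit disk 𝔻 with p(0) = 1 and Re p(z) > 0 for all z ∈ 𝔻, and let p_n denote its n-th Taylor coefficient at 0. Then for all positive integers n, k and every complex number μ, one has |p_{n+k} − μ·p_n·p_k| ≤ 2·max{1, |2μ − 1|}; in particular |p_{n+k} − μ·p_n·p_k| ≤ 2 whenever μ is real with 0 ≤ μ ≤ 1. -/

import Mathlib

open Complex Metric

/-- The `n`-th Taylor coefficient of `f` at `0`. -/
noncomputable def taylorCoeff (f : ℂ → ℂ) (n : ℕ) : ℂ :=
  iteratedDeriv n f 0 / n.factorial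

/-- Membership in the class `S*_B`: `f` is analytic on the unit disk, normalized by
`f(0) = 0` and `f'(0) = 1`, and there is a Schwarz function `w` with
`z f'(z) (1 - log(1 + w z)) = f z` on the unit disk. -/
def IsSB (f : ℂ → ℂ) : Prop :=
  DifferentiableOn ℂ f (ball (0:ℂ) 1) ∧ f 0 = 0 ∧ deriv f 0 = 1 ∧
  ∃ w : ℂ → ℂ, DifferentiableOn ℂ w (ball (0:ℂ) 1) ∧ w 0 = 0 ∧
    (∀ z ∈ ball (0:ℂ) 1, ‖w z‖ < 1) ∧
    (∀ z ∈ ball (0:ℂ) 1, z * deriv f z * (1 - Complex.log (1 + w z)) = f z)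

open MeasureTheory Real

lemma coeff_integral (p : ℂ → ℂ) (hp : DifferentiableOn ℂ p (ball (0:ℂ) 1))
    {r : ℝ} (hr0 : 0 < r) (hr1 : r < 1) (m : ℕ) :
    ∫ t in (0:ℝ)..(2*π), Complex.exp (-(m:ℂ) * t * I) * p ((r:ℂ) * Complex.exp ((t:ℂ) * I))
      = 2 * (π:ℂ) * (r:ℂ)^m * taylorCoeff p m := by
  have hrne : (r:ℂ) ≠ 0 := by exact_mod_cast hr0.ne'
  set R : NNReal := ⟨r, hr0.le⟩ with hR
  have hRr : (R : ℝ) = r := rfl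
  have hd : DifferentiableOn ℂ p (closedBall (0:ℂ) R) := by
    rw [hRr]; exact hp.mono (closedBall_subset_ball hr1)
  have hF := hd.hasFPowerSeriesOnBall (show 0 < R by exact_mod_cast hr0)
  have hco : taylorCoeff p m = cauchyPowerSeries p 0 r m (fun _ => 1) := by
    have h1 := hF.factorial_smul (1:ℂ) m
    rw [← iteratedDeriv_eq_iteratedFDeriv] at h1
    rw [taylorCoeff, ← h1, hRr, nsmul_eq_mul]
    exact mul_div_cancel_left₀ _ (by exact_mod_cast m.factorial_ne_zero)
  have hap := cauchyPowerSeries_apply p 0 r m 1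
  have key : ∀ t : ℝ, deriv (circleMap 0 r) t •
      (((1:ℂ) / (circleMap 0 r t - 0)) ^ m • (circleMap 0 r t - 0)⁻¹ • p (circleMap 0 r t))
      = (I * ((r:ℂ)⁻¹)^m) *
        (Complex.exp (-(m:ℂ) * t * I) * p ((r:ℂ) * Complex.exp ((t:ℂ) * I))) := by
    intro t
    have hz : (circleMap 0 r t) = (r:ℂ) * Complex.exp ((t:ℂ)*I) := by simp [circleMap]
    have hene : Complex.exp ((t:ℂ)*I) ≠ 0 := Complex.exp_ne_zero _
    rw [deriv_circleMap, hz, smul_eq_mul, smul_eq_mul, smul_eq_mul, sub_zero]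
    have hexp : ((1:ℂ) / ((r:ℂ) * Complex.exp ((t:ℂ)*I)))^m
        = ((r:ℂ)⁻¹)^m * Complex.exp (-(m:ℂ) * t * I) := by
      rw [one_div, mul_inv, mul_pow, ← Complex.exp_neg, ← Complex.exp_nat_mul]
      congr 2
      ring
    rw [hexp, mul_inv]
    field_simp
  rw [circleIntegral] at hap
  simp only [key] at hap
  rw [intervalIntegral.integral_const_mul] at hap
  rw [hco, hap, smul_eq_mul]
  have hpine : (π:ℂ) ≠ 0 := by exact_mod_cast Real.pi_ne_zero
  generalize (∫ t in (0:ℝ)..(2*π), Complex.exp (-(m:ℂ) * t * I) * p ((r:ℂ) * Complex.exp ((t:ℂ) * I))) = J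
  field_simp
  rw [mul_assoc, ← mul_pow, mul_one_div_cancel hrne, one_pow, mul_one]

lemma zero_integral (p : ℂ → ℂ) (hp : DifferentiableOn ℂ p (ball (0:ℂ) 1))
    {r : ℝ} (hr0 : 0 < r) (hr1 : r < 1) (m : ℕ) (hm : 0 < m) :
    ∫ t in (0:ℝ)..(2*π), Complex.exp ((m:ℂ) * t * I) * p ((r:ℂ) * Complex.exp ((t:ℂ) * I)) = 0 := by
  have hrne : (r:ℂ) ≠ 0 := by exact_mod_cast hr0.ne'
  have h0 : (∮ z in C(0, r), z^(m-1) * p z) = 0 := by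
    apply Complex.circleIntegral_eq_zero_of_differentiable_on_off_countable hr0.le
      Set.countable_empty
    · exact (continuous_pow _).continuousOn.mul (hp.continuousOn.mono
        (closedBall_subset_ball hr1))
    · intro z hz
      exact (differentiableAt_pow _).mul
        (hp.differentiableAt (isOpen_ball.mem_nhds (ball_subset_ball hr1.le hz.1)))
  have key : ∀ t : ℝ, deriv (circleMap 0 r) t • ((circleMap 0 r t)^(m-1) * p (circleMap 0 r t))
      = (I * (r:ℂ)^m) * (Complex.exp ((m:ℂ) * t * I) * p ((r:ℂ) * Complex.exp ((t:ℂ) * I))) := by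
    intro t
    have hz : (circleMap 0 r t) = (r:ℂ) * Complex.exp ((t:ℂ)*I) := by simp [circleMap]
    rw [deriv_circleMap, hz, smul_eq_mul]
    rw [mul_pow, ← Complex.exp_nat_mul]
    have h1 : Complex.exp ((m:ℂ) * t * I) = Complex.exp ((t:ℂ)*I) * Complex.exp ((m-1 : ℕ) * ((t:ℂ)*I)) := by
      rw [← Complex.exp_add]
      congr 1
      have : ((m-1:ℕ):ℂ) = (m:ℂ) - 1 := by
        have : (1:ℕ) ≤ m := hm
        push_cast [this]; ring
      rw [this]; ring
    rw [h1]
    have h2 : ((r:ℂ))^m = (r:ℂ) * (r:ℂ)^(m-1) := by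
      conv_lhs => rw [← Nat.succ_pred_eq_of_pos hm]
      rw [pow_succ]
      conv_rhs => rw [show m - 1 = m.pred from rfl]
      ring
    rw [h2]; ring
  rw [circleIntegral] at h0
  simp only [key] at h0
  rw [intervalIntegral.integral_const_mul] at h0
  rcases mul_eq_zero.1 h0 with h | h
  · exact absurd h (by simp [Complex.I_ne_zero, hrne])
  · exact h

lemma mycs (a b c : ℝ) (h : ∀ x : ℝ, 0 ≤ a * x ^ 2 + b * x + c) : b^2 ≤ 4*a*c := by
  have h' : ∀ x : ℝ, 0 ≤ a * (x * x) + b * x + c := fun x => by nlinarith [h x]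
  have : discrim a b c ≤ 0 := discrim_le_zero h'
  rw [discrim] at this; nlinarith [this]

lemma cs_integral (f g : ℝ → ℝ) (hf : Continuous f) (hg : Continuous g) (a b : ℝ) (hab : a ≤ b) :
    (∫ t in a..b, f t * g t) ^ 2 ≤ (∫ t in a..b, f t ^ 2) * (∫ t in a..b, g t ^ 2) := by
  set A := ∫ t in a..b, f t ^ 2 with hA
  set B := ∫ t in a..b, f t * g t with hB
  set C := ∫ t in a..b, g t ^ 2 with hC
  have h : ∀ x : ℝ, 0 ≤ A * x ^ 2 + (2 * B) * x + C := by
    intro x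
    have h1 : ∀ t, 0 ≤ (x * f t + g t) ^ 2 := fun t => sq_nonneg _
    have h2 : (∫ t in a..b, (x * f t + g t) ^ 2) = A * x ^ 2 + (2 * B) * x + C := by
      rw [hA, hB, hC]
      have : ∀ t, (x * f t + g t) ^ 2 = x ^ 2 * f t ^ 2 + (2 * x) * (f t * g t) + g t ^ 2 := by
        intro t; ring
      simp only [this]
      rw [intervalIntegral.integral_add, intervalIntegral.integral_add,
        intervalIntegral.integral_const_mul, intervalIntegral.integral_const_mul]
      · ring
      · exact (((continuous_const.mul (hf.pow 2)))).intervalIntegrable a b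
      · exact ((continuous_const.mul (hf.mul hg))).intervalIntegrable a b
      · exact (((continuous_const.mul (hf.pow 2))).add
          ((continuous_const.mul (hf.mul hg)))).intervalIntegrable a b
      · exact (hg.pow 2).intervalIntegrable a b
    rw [← h2]
    exact intervalIntegral.integral_nonneg hab fun t _ => h1 t
  have := mycs A (2*B) C h
  nlinarith [this]

lemma myconj (f : ℝ → ℂ) (a b : ℝ) :
    ∫ t in a..b, (starRingEnd ℂ) (f t) = (starRingEnd ℂ) (∫ t in a..b, f t) := by
  simp only [intervalIntegral, ← integral_conj, map_sub]

lemma myre (f : ℝ → ℂ) (a b : ℝ) (hf : IntervalIntegrable f volume a b) :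
    ∫ t in a..b, (f t).re = (∫ t in a..b, f t).re := by
  have h1 := integral_re (𝕜 := ℂ) hf.1
  have h2 := integral_re (𝕜 := ℂ) hf.2
  simp only [RCLike.re_to_complex] at h1 h2
  simp only [intervalIntegral, h1, h2, Complex.sub_re]

set_option maxHeartbeats 2000000 in
lemma core (p : ℂ → ℂ) (hp : DifferentiableOn ℂ p (ball (0:ℂ) 1)) (hp0 : p 0 = 1)
    (hre : ∀ z ∈ ball (0:ℂ) 1, 0 < (p z).re)
    {r : ℝ} (hr0 : 0 < r) (hr1 : r < 1) (n k : ℕ) (hn : 0 < n) (hk : 0 < k) (μ : ℂ) :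
    norm (taylorCoeff p (n+k) - μ * taylorCoeff p n * taylorCoeff p k) * r^(n+k)
      ≤ 2 * max 1 (norm (2*μ - 1)) := by
  have hpi : (0:ℝ) < 2*π := by positivity
  set ι : ℝ → ℂ := fun t => (r:ℂ) * Complex.exp ((t:ℂ)*I) with hι
  have hmem : ∀ t : ℝ, ι t ∈ ball (0:ℂ) 1 := by
    intro t
    rw [mem_ball_zero_iff]
    simp only [hι, norm_mul, norm_real, Real.norm_eq_abs, norm_exp_ofReal_mul_I,
      mul_one, abs_of_pos hr0]
    exact hr1
  have hιc : Continuous ι := by fun_prop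
  have hpc : Continuous fun t : ℝ => p (ι t) :=
    hp.continuousOn.comp_continuous hιc hmem
  set w : ℝ → ℝ := fun t => (p (ι t)).re with hw
  have hw0 : ∀ t, 0 ≤ w t := fun t => (hre _ (hmem t)).le
  have hwc : Continuous w := Complex.continuous_re.comp hpc
  -- moments
  have hA : ∀ m : ℕ, 0 < m →
      (∫ t in (0:ℝ)..(2*π), Complex.exp (-(m:ℂ)*t*I) * (w t : ℂ))
        = (π:ℂ) * (r:ℂ)^m * taylorCoeff p m := by
    intro m hm
    have hsplit : ∀ t : ℝ, Complex.exp (-(m:ℂ)*t*I) * (w t : ℂ)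
        = (Complex.exp (-(m:ℂ)*t*I) * p (ι t)
          + (starRingEnd ℂ) (Complex.exp ((m:ℂ)*t*I) * p (ι t))) / 2 := by
      intro t
      have : ((w t : ℂ)) = (p (ι t) + (starRingEnd ℂ) (p (ι t))) / 2 := by
        rw [hw, Complex.add_conj]; push_cast; ring
      rw [this, map_mul]
      have : (starRingEnd ℂ) (Complex.exp ((m:ℂ)*t*I)) = Complex.exp (-(m:ℂ)*t*I) := by
        rw [← Complex.exp_conj]
        congr 1
        simp [Complex.conj_I]
      rw [this]; ring
    simp only [hsplit]
    rw [intervalIntegral.integral_div, intervalIntegral.integral_add, myconj,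
      coeff_integral p hp hr0 hr1 m, zero_integral p hp hr0 hr1 m hm]
    · simp; ring
    · exact ((Complex.continuous_exp.comp (by fun_prop)).mul hpc).intervalIntegrable _ _
    · exact (Complex.continuous_conj.comp
        ((Complex.continuous_exp.comp (by fun_prop)).mul hpc)).intervalIntegrable _ _
  have htc0 : taylorCoeff p 0 = 1 := by
    simp [taylorCoeff, iteratedDeriv_zero, hp0]
  have hwint : IntervalIntegrable (fun t : ℝ => p (ι t)) volume 0 (2*π) :=
    hpc.intervalIntegrable _ _
  have hA0r : (∫ t in (0:ℝ)..(2*π), w t) = 2*π := by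
    have h := coeff_integral p hp hr0 hr1 0
    simp only [Nat.cast_zero, neg_zero, zero_mul, Complex.exp_zero, one_mul, pow_zero,
      mul_one, htc0] at h
    have h' : (∫ t in (0:ℝ)..(2*π), p (ι t)) = 2*(π:ℂ) := h
    have hre2 := myre (fun t => p (ι t)) 0 (2*π) hwint
    rw [hw]
    rw [hre2, h']
    simp
  have hA0c : (∫ t in (0:ℝ)..(2*π), (w t : ℂ)) = 2*(π:ℂ) := by
    rw [intervalIntegral.integral_ofReal, hA0r]
    push_cast; ring
  -- abbreviations
  set a := taylorCoeff p n * (r:ℂ)^n / 2 with ha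
  set b := taylorCoeff p k * (r:ℂ)^k / 2 with hb
  set c := taylorCoeff p (n+k) * (r:ℂ)^(n+k) / 2 with hc
  have hwcC : Continuous fun t : ℝ => ((w t : ℂ)) := Complex.continuous_ofReal.comp hwc
  have hXc : ∀ m : ℕ, Continuous fun t : ℝ => Complex.exp (-(m:ℂ)*t*I) := by
    intro m; exact Complex.continuous_exp.comp (by fun_prop)
  have hEX : (∫ t in (0:ℝ)..(2*π), Complex.exp (-(n:ℂ)*t*I) * (w t : ℂ)) = 2*(π:ℂ)*a := by
    rw [hA n hn, ha]; ring
  have hEY : (∫ t in (0:ℝ)..(2*π), Complex.exp (-(k:ℂ)*t*I) * (w t : ℂ)) = 2*(π:ℂ)*b := by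
    rw [hA k hk, hb]; ring
  have hEXY : (∫ t in (0:ℝ)..(2*π), Complex.exp (-((n+k:ℕ):ℂ)*t*I) * (w t : ℂ))
      = 2*(π:ℂ)*c := by
    rw [hA (n+k) (by positivity), hc]; ring
  -- second moments and coefficient bounds
  have hS : ∀ (m : ℕ) (d : ℂ),
      (∫ t in (0:ℝ)..(2*π), Complex.exp (-(m:ℂ)*t*I) * (w t : ℂ)) = 2*(π:ℂ)*d →
      (∫ t in (0:ℝ)..(2*π), norm (Complex.exp (-(m:ℂ)*t*I) - d)^2 * w t)
        = 2*π*(1 - norm d^2) := by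
    intro m d hEd
    have habs1 : ∀ t : ℝ, norm (Complex.exp (-(m:ℂ)*t*I)) = 1 := by
      intro t
      rw [show -(m:ℂ)*t*I = Complex.ofReal (-((m:ℝ)*t)) * I from by push_cast; ring]
      exact Complex.norm_exp_ofReal_mul_I _
    have hpt : ∀ t : ℝ, norm (Complex.exp (-(m:ℂ)*t*I) - d)^2 * w t
        = (1 + norm d^2) * w t
          - 2 * ((Complex.exp (-(m:ℂ)*t*I) * (w t : ℂ)) * (starRingEnd ℂ) d).re := by
      intro t
      have h1 : norm (Complex.exp (-(m:ℂ)*t*I) - d)^2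
          = norm (Complex.exp (-(m:ℂ)*t*I))^2
            - 2*((Complex.exp (-(m:ℂ)*t*I)) * (starRingEnd ℂ) d).re + norm d^2 := by
        rw [← normSq_eq_norm_sq, ← normSq_eq_norm_sq, ← normSq_eq_norm_sq, normSq_sub]; ring
      rw [h1, habs1]
      have h2 : ((Complex.exp (-(m:ℂ)*t*I) * (w t : ℂ)) * (starRingEnd ℂ) d).re
          = ((Complex.exp (-(m:ℂ)*t*I)) * (starRingEnd ℂ) d).re * w t := by
        rw [show (Complex.exp (-(m:ℂ)*t*I) * (w t : ℂ)) * (starRingEnd ℂ) d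
          = ((Complex.exp (-(m:ℂ)*t*I)) * (starRingEnd ℂ) d) * (w t : ℂ) by ring]
        simp [Complex.mul_re]
      rw [h2]; ring
    simp only [hpt]
    have hi1 : IntervalIntegrable (fun t : ℝ => (1 + norm d^2) * w t) volume 0 (2*π) :=
      (continuous_const.mul hwc).intervalIntegrable _ _
    have hcmul : Continuous fun t : ℝ => (Complex.exp (-(m:ℂ)*t*I) * (w t : ℂ)) *
        (starRingEnd ℂ) d := ((hXc m).mul hwcC).mul continuous_const
    have hi2 : IntervalIntegrable
        (fun t : ℝ => 2 * ((Complex.exp (-(m:ℂ)*t*I) * (w t : ℂ)) * (starRingEnd ℂ) d).re)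
        volume 0 (2*π) :=
      (continuous_const.mul (Complex.continuous_re.comp hcmul)).intervalIntegrable _ _
    rw [intervalIntegral.integral_sub hi1 hi2, intervalIntegral.integral_const_mul,
      intervalIntegral.integral_const_mul, hA0r]
    have h3 : (∫ t in (0:ℝ)..(2*π),
        ((Complex.exp (-(m:ℂ)*t*I) * (w t : ℂ)) * (starRingEnd ℂ) d).re)
        = 2*π*(norm d^2) := by
      rw [myre _ _ _ (hcmul.intervalIntegrable _ _), intervalIntegral.integral_mul_const, hEd]
      rw [mul_assoc, Complex.mul_conj]
      rw [show (2*(π:ℂ)) * ((normSq d : ℝ):ℂ) = (((2*π*(normSq d) : ℝ)):ℂ) by push_cast; ring]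
      rw [Complex.ofReal_re, ← Complex.sq_norm]
    rw [h3]; ring
  have hcoeff_le : ∀ (m : ℕ) (d : ℂ),
      (∫ t in (0:ℝ)..(2*π), Complex.exp (-(m:ℂ)*t*I) * (w t : ℂ)) = 2*(π:ℂ)*d →
      norm d ≤ 1 := by
    intro m d hEd
    have h1 := hS m d hEd
    have h2 : (0:ℝ) ≤ ∫ t in (0:ℝ)..(2*π),
        norm (Complex.exp (-(m:ℂ)*t*I) - d)^2 * w t :=
      intervalIntegral.integral_nonneg hpi.le fun t _ => mul_nonneg (sq_nonneg _) (hw0 t)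
    rw [h1] at h2
    have h3 : norm d ^ 2 ≤ 1 := by nlinarith [Real.pi_pos]
    nlinarith [norm_nonneg d, h3, sq_nonneg (norm d - 1)]
  have hS1 := hS n a hEX
  have hS2 := hS k b hEY
  have ha1 : norm a ≤ 1 := hcoeff_le n a hEX
  have hb1 : norm b ≤ 1 := hcoeff_le k b hEY
  -- the covariance integral
  have hexpand : ∀ t : ℝ,
      (Complex.exp (-(n:ℂ)*t*I) - a) * (Complex.exp (-(k:ℂ)*t*I) - b) * (w t : ℂ)
      = Complex.exp (-((n+k:ℕ):ℂ)*t*I) * (w t : ℂ)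
        - b * (Complex.exp (-(n:ℂ)*t*I) * (w t : ℂ))
        - a * (Complex.exp (-(k:ℂ)*t*I) * (w t : ℂ)) + (a*b) * (w t : ℂ) := by
    intro t
    have h1 : Complex.exp (-((n+k:ℕ):ℂ)*t*I)
        = Complex.exp (-(n:ℂ)*t*I) * Complex.exp (-(k:ℂ)*t*I) := by
      rw [← Complex.exp_add]; congr 1; push_cast; ring
    rw [h1]; ring
  have hG : (∫ t in (0:ℝ)..(2*π),
      (Complex.exp (-(n:ℂ)*t*I) - a) * (Complex.exp (-(k:ℂ)*t*I) - b) * (w t : ℂ))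
      = 2*(π:ℂ)*(c - a*b) := by
    simp only [hexpand]
    have i1 : IntervalIntegrable (fun t : ℝ => Complex.exp (-((n+k:ℕ):ℂ)*t*I) * (w t : ℂ))
        volume 0 (2*π) := ((hXc (n+k)).mul hwcC).intervalIntegrable _ _
    have i2 : IntervalIntegrable (fun t : ℝ => b * (Complex.exp (-(n:ℂ)*t*I) * (w t : ℂ)))
        volume 0 (2*π) := (continuous_const.mul ((hXc n).mul hwcC)).intervalIntegrable _ _
    have i3 : IntervalIntegrable (fun t : ℝ => a * (Complex.exp (-(k:ℂ)*t*I) * (w t : ℂ)))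
        volume 0 (2*π) := (continuous_const.mul ((hXc k).mul hwcC)).intervalIntegrable _ _
    have i4 : IntervalIntegrable (fun t : ℝ => (a*b) * (w t : ℂ)) volume 0 (2*π) :=
      (continuous_const.mul hwcC).intervalIntegrable _ _
    rw [intervalIntegral.integral_add ((i1.sub i2).sub i3) i4,
      intervalIntegral.integral_sub (i1.sub i2) i3, intervalIntegral.integral_sub i1 i2,
      intervalIntegral.integral_const_mul, intervalIntegral.integral_const_mul,
      intervalIntegral.integral_const_mul, hEXY, hEX, hEY, hA0c]
    ring
  -- Cauchy-Schwarz
  set F : ℝ → ℝ := fun t => norm (Complex.exp (-(n:ℂ)*t*I) - a) * Real.sqrt (w t)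
    with hF
  set G : ℝ → ℝ := fun t => norm (Complex.exp (-(k:ℂ)*t*I) - b) * Real.sqrt (w t)
    with hGdef
  have hFc : Continuous F := by
    apply Continuous.mul
    · exact continuous_norm.comp ((hXc n).sub continuous_const)
    · exact Real.continuous_sqrt.comp hwc
  have hGc : Continuous G := by
    apply Continuous.mul
    · exact continuous_norm.comp ((hXc k).sub continuous_const)
    · exact Real.continuous_sqrt.comp hwc
  have hcs := cs_integral F G hFc hGc 0 (2*π) hpi.le
  have hFsq : (∫ t in (0:ℝ)..(2*π), F t ^ 2) = 2*π*(1 - norm a^2) := by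
    rw [← hS1]
    apply intervalIntegral.integral_congr
    intro t _
    rw [hF]
    simp only
    rw [mul_pow, Real.sq_sqrt (hw0 t)]
  have hGsq : (∫ t in (0:ℝ)..(2*π), G t ^ 2) = 2*π*(1 - norm b^2) := by
    rw [← hS2]
    apply intervalIntegral.integral_congr
    intro t _
    rw [hGdef]
    simp only
    rw [mul_pow, Real.sq_sqrt (hw0 t)]
  have hFGnn : (0:ℝ) ≤ ∫ t in (0:ℝ)..(2*π), F t * G t :=
    intervalIntegral.integral_nonneg hpi.le fun t _ => by
      have := hw0 t
      positivity
  -- bound on |G integral|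
  have habsG : norm (∫ t in (0:ℝ)..(2*π),
      (Complex.exp (-(n:ℂ)*t*I) - a) * (Complex.exp (-(k:ℂ)*t*I) - b) * (w t : ℂ))
      ≤ ∫ t in (0:ℝ)..(2*π), F t * G t := by
    refine (intervalIntegral.norm_integral_le_integral_norm hpi.le).trans_eq ?_
    apply intervalIntegral.integral_congr
    intro t _
    simp only [hF, hGdef, norm_mul, norm_real, Real.norm_eq_abs,
      _root_.abs_of_nonneg (hw0 t)]
    conv_lhs => rw [← Real.mul_self_sqrt (hw0 t)]
    ring
  have hAB0 : 0 ≤ norm a * norm b :=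
    mul_nonneg (norm_nonneg _) (norm_nonneg _)
  have hFG_le : (∫ t in (0:ℝ)..(2*π), F t * G t)
      ≤ 2*π*(1 - norm a * norm b) := by
    rw [hFsq, hGsq] at hcs
    have key : (1 - norm a^2)*(1 - norm b^2)
        ≤ (1 - norm a * norm b)^2 := by
      nlinarith [sq_nonneg (norm a - norm b)]
    have h1 : (2*π*(1 - norm a^2)) * (2*π*(1 - norm b^2))
        ≤ (2*π*(1 - norm a * norm b))^2 := by
      calc (2*π*(1 - norm a^2)) * (2*π*(1 - norm b^2))
          = (2*π)^2 * ((1 - norm a^2)*(1 - norm b^2)) := by ring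
        _ ≤ (2*π)^2 * (1 - norm a * norm b)^2 :=
            mul_le_mul_of_nonneg_left key (by positivity)
        _ = (2*π*(1 - norm a * norm b))^2 := by ring
    have h2 : 0 ≤ 2*π*(1 - norm a * norm b) := by
      nlinarith [Real.pi_pos, mul_le_mul ha1 hb1 (norm_nonneg b) zero_le_one]
    nlinarith [hFGnn]
  have hcab : norm (c - a*b) ≤ 1 - norm a * norm b := by
    have h1 : norm (2*(π:ℂ)*(c - a*b)) = 2*π*norm (c - a*b) := by
      rw [norm_mul, norm_mul, Complex.norm_two, Complex.norm_real, Real.norm_eq_abs,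
        _root_.abs_of_pos Real.pi_pos]
    rw [hG, h1] at habsG
    have := habsG.trans hFG_le
    nlinarith [Real.pi_pos]
  have hTr : (taylorCoeff p (n+k) - μ * taylorCoeff p n * taylorCoeff p k) * ((r:ℂ))^(n+k)
      = 2*(c - a*b) - 2*(2*μ-1)*(a*b) := by
    rw [hc, ha, hb, pow_add]; ring
  have habs_final : norm (taylorCoeff p (n+k) - μ * taylorCoeff p n * taylorCoeff p k)
        * r^(n+k)
      = norm (2*(c-a*b) - 2*(2*μ-1)*(a*b)) := by
    rw [← hTr, norm_mul, norm_pow, Complex.norm_real, Real.norm_eq_abs, _root_.abs_of_pos hr0]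
  rw [habs_final]
  have htri : norm (2*(c-a*b) - 2*(2*μ-1)*(a*b))
      ≤ 2*norm (c-a*b) + 2*norm (2*μ-1)*(norm a * norm b) := by
    calc norm (2*(c-a*b) - 2*(2*μ-1)*(a*b))
        ≤ norm (2*(c-a*b)) + norm (2*(2*μ-1)*(a*b)) :=
          norm_sub_le _ _
      _ = 2*norm (c-a*b) + 2*norm (2*μ-1)*(norm a * norm b) := by
          rw [norm_mul, norm_mul, norm_mul, norm_mul, Complex.norm_two]
  have hM1 : (1:ℝ) ≤ max 1 (norm (2*μ-1)) := le_max_left _ _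
  have hM2 : norm (2*μ-1) ≤ max 1 (norm (2*μ-1)) := le_max_right _ _
  nlinarith [htri, hcab, hAB0, norm_nonneg (c-a*b), norm_nonneg (2*μ-1)]

theorem caratheodory_coeff_functional (p : ℂ → ℂ)
    (hp : DifferentiableOn ℂ p (ball (0:ℂ) 1)) (hp0 : p 0 = 1)
    (hre : ∀ z ∈ ball (0:ℂ) 1, 0 < (p z).re) :
    ∀ n k : ℕ, 0 < n → 0 < k →
      (∀ μ : ℂ, norm (taylorCoeff p (n + k) - μ * taylorCoeff p n * taylorCoeff p k) ≤
        2 * max 1 (norm (2 * μ - 1))) ∧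
      (∀ μ : ℝ, 0 ≤ μ → μ ≤ 1 →
        norm (taylorCoeff p (n + k) - (μ : ℂ) * taylorCoeff p n * taylorCoeff p k) ≤ 2) := by
  intro n k hn hk
  have hmain : ∀ μ : ℂ,
      norm (taylorCoeff p (n + k) - μ * taylorCoeff p n * taylorCoeff p k) ≤
        2 * max 1 (norm (2 * μ - 1)) := by
    intro μ
    set T := norm (taylorCoeff p (n + k) - μ * taylorCoeff p n * taylorCoeff p k) with hT
    have htend : Filter.Tendsto (fun r : ℝ => T * r^(n+k))
        (nhdsWithin 1 (Set.Iio 1)) (nhds T) := by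
      have hc : Continuous fun r : ℝ => T * r^(n+k) := by continuity
      have h1 := hc.tendsto 1
      simp only [one_pow, mul_one] at h1
      exact h1.mono_left nhdsWithin_le_nhds
    have hev : ∀ᶠ r in nhdsWithin (1:ℝ) (Set.Iio 1),
        T * r^(n+k) ≤ 2 * max 1 (norm (2 * μ - 1)) := by
      filter_upwards [Ioo_mem_nhdsLT_of_mem
        (show (1:ℝ) ∈ Set.Ioc (0:ℝ) 1 by norm_num)] with r hr
      exact core p hp hp0 hre hr.1 hr.2 n k hn hk μ
    exact le_of_tendsto htend hev
  refine ⟨hmain, ?_⟩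
  intro μ h0 h1
  have h := hmain (μ : ℂ)
  have hle : norm (2*(μ:ℂ) - 1) ≤ 1 := by
    rw [show (2*(μ:ℂ) - 1) = ((2*μ - 1 : ℝ):ℂ) by push_cast; ring, Complex.norm_real, Real.norm_eq_abs]
    rw [abs_le]; constructor <;> linarith
  rw [max_eq_left hle] at h
  linarith [h]
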